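/- arXiv:1106.6086 — 2 statements merged into one kernel-verified Lean document; each statement's English description precedes it below -/
import Mathlib

section
/- Let e ≥ 2 and let d : Fin e × Fin e → ℤ satisfy: (a) d(i,i) = 0 for all i; (b) d(i,j) + d(j,l) ≤ d(i,l) for all i, j, l; (c) Σ_l d(l,j) = Σ_l d(j,l) for every j. If d(i₀,j₀) ≥ 0 for some i₀ ≠ j₀, then d(i₀,j₀) = d(j₀,i₀) = 0, and moreover d(l,i₀) = d(l,j₀) and d(i₀,l) = d(j₀,l) for all l. -/
open Finset

/-- Let `e ≥ 2` and `d : Fin e → Fin e → ℤ` satisfy (a) `d i i = 0`;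
(b) `d i j + d j l ≤ d i l`; and (c) `Σ_l d l j = Σ_l d j l` for every `j`.
If `d i₀ j₀ ≥ 0` for some `i₀ ≠ j₀`, then `d i₀ j₀ = d j₀ i₀ = 0`, and moreover
`d l i₀ = d l j₀` and `d i₀ l = d j₀ l` for all `l`. -/
theorem hereditary_fibre_degrees (e : ℕ) (he : 2 ≤ e) (d : Fin e → Fin e → ℤ)
    (ha : ∀ i, d i i = 0)
    (hb : ∀ i j l, d i j + d j l ≤ d i l)
    (hc : ∀ j, ∑ l, d l j = ∑ l, d j l)
    (i₀ j₀ : Fin e) (hne : i₀ ≠ j₀) (hpos : 0 ≤ d i₀ j₀) :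
    d i₀ j₀ = 0 ∧ d j₀ i₀ = 0 ∧ (∀ l, d l i₀ = d l j₀) ∧ (∀ l, d i₀ l = d j₀ l) := by
  set c := d i₀ j₀ with hcdef
  -- pointwise inequalities
  have h1 : ∀ l, d l i₀ + c ≤ d l j₀ := fun l => hb l i₀ j₀
  have h2 : ∀ l, c + d j₀ l ≤ d i₀ l := fun l => hb i₀ j₀ l
  -- sum versions
  have hs1 : (∑ l, d l i₀) + e * c ≤ ∑ l, d l j₀ := by
    have := Finset.sum_le_sum (fun l (_ : l ∈ Finset.univ) => h1 l)
    simpa [Finset.sum_add_distrib, Finset.card_univ, mul_comm] using this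
  have hs2 : e * c + (∑ l, d j₀ l) ≤ ∑ l, d i₀ l := by
    have := Finset.sum_le_sum (fun l (_ : l ∈ Finset.univ) => h2 l)
    simpa [Finset.sum_add_distrib, Finset.card_univ, mul_comm] using this
  have key : 2 * (e * c) ≤ 0 := by
    have a1 := hc i₀
    have a2 := hc j₀
    linarith
  have hepos : (0 : ℤ) < e := by exact_mod_cast lt_of_lt_of_le (by norm_num) he
  have hc0 : c = 0 := by
    nlinarith
  -- sums are equal
  have hsumeq1 : (∑ l, d l i₀) = ∑ l, d l j₀ := by
    have a1 := hc i₀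
    have a2 := hc j₀
    rw [hc0] at hs1 hs2
    linarith
  have hsumeq2 : (∑ l, d i₀ l) = ∑ l, d j₀ l := by
    rw [← hc i₀, ← hc j₀]; exact hsumeq1
  have h1' : ∀ l, d l i₀ ≤ d l j₀ := fun l => by have := h1 l; rw [hc0] at this; linarith
  have h2' : ∀ l, d j₀ l ≤ d i₀ l := fun l => by have := h2 l; rw [hc0] at this; linarith
  have e1 : ∀ l, d l i₀ = d l j₀ := by
    intro l
    exact (Finset.sum_eq_sum_iff_of_le (fun i _ => h1' i)).mp hsumeq1 l (Finset.mem_univ l)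
  have e2 : ∀ l, d i₀ l = d j₀ l := by
    intro l
    exact ((Finset.sum_eq_sum_iff_of_le (fun i _ => h2' i)).mp hsumeq2.symm l
      (Finset.mem_univ l)).symm
  refine ⟨hc0, ?_, e1, e2⟩
  have := e2 i₀
  rw [ha i₀] at this
  exact this.symm
end

section
/- Let k be an algebraically closed field, let N₁ and N₂ be locally free sheaves on P¹ with N₂ ≅ O ⊕ O(−1)^{⊕(e−1)} for some e ≥ 1, and suppose N₁ admits a finite filtration 0 < N₁¹ < ⋯ < N₁^r = N₁ by subsheaves such that each quotient N₁^{i+1}/N₁^i is isomorphic to O ⊕ O(−1)^{⊕(e−1)}. Let φ : N₁ → N₂ be a morphism of sheaves which is a map of modules over a sheaf of algebras Ā acting on both, where each N₁^i is an Ā-submodule and N₂ is 1-critical as an Ā-module (every proper quotient has dimension < 1). If φ ≠ 0 then φ is surjective. -/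
open LaurentPolynomial

noncomputable section

/-- The lattice `k[t] ⊂ k[t, t⁻¹]` of sections of `O` over the chart `U₀` of `P¹`. -/
def polyLat (k : Type) [Field k] : Submodule k (LaurentPolynomial k) :=
  Submodule.span k (Set.range fun n : ℕ => (T (n : ℤ) : LaurentPolynomial k))

/-- The lattice `t^d·k[t⁻¹] ⊂ k[t, t⁻¹]` of sections of `O(d)` over the chart `U₁`. -/
def twistLat (k : Type) [Field k] (d : ℤ) : Submodule k (LaurentPolynomial k) :=
  Submodule.span k (Set.range fun n : ℕ => (T (d - (n : ℤ)) : LaurentPolynomial k))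

/-- A (quasi-coherent) sheaf on `P¹ = U₀ ∪ U₁` given by Čech data: a module `V` over
`k[t,t⁻¹]` (sections over `U₀ ∩ U₁`) together with lattices `M₀`, `M₁` of sections over
`U₀` (stable under `t`) and over `U₁` (stable under `t⁻¹`). -/
structure VB (k : Type) [Field k] where
  V : Type
  [instAdd : AddCommGroup V]
  [instMod : Module (LaurentPolynomial k) V]
  [instModk : Module k V]
  [instTower : IsScalarTower k (LaurentPolynomial k) V]
  M0 : Submodule k V
  M1 : Submodule k V
  stable0 : ∀ v ∈ M0, (T 1 : LaurentPolynomial k) • v ∈ M0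
  stable1 : ∀ v ∈ M1, (T (-1) : LaurentPolynomial k) • v ∈ M1

attribute [instance] VB.instAdd VB.instMod VB.instModk VB.instTower

variable {k : Type} [Field k]

/-- An isomorphism of sheaves on `P¹`. -/
structure VBIso (E F : VB k) where
  toLin : E.V ≃ₗ[LaurentPolynomial k] F.V
  map0 : ∀ v : E.V, v ∈ E.M0 ↔ toLin v ∈ F.M0
  map1 : ∀ v : E.V, v ∈ E.M1 ↔ toLin v ∈ F.M1

lemma T_mul_mem_polyLat {p : LaurentPolynomial k} (hp : p ∈ polyLat k) :
    (T 1 : LaurentPolynomial k) * p ∈ polyLat k := by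
  induction hp using Submodule.span_induction with
  | mem x hx =>
    obtain ⟨n, rfl⟩ := hx
    refine Submodule.subset_span ⟨n + 1, ?_⟩
    rw [← T_add]; push_cast; ring_nf
  | zero => simp
  | add x y _ _ hx hy => rw [mul_add]; exact add_mem hx hy
  | smul a x _ hx => rw [mul_smul_comm]; exact Submodule.smul_mem _ a hx

lemma T_mul_mem_twistLat {d : ℤ} {p : LaurentPolynomial k} (hp : p ∈ twistLat k d) :
    (T (-1) : LaurentPolynomial k) * p ∈ twistLat k d := by
  induction hp using Submodule.span_induction with
  | mem x hx =>
    obtain ⟨n, rfl⟩ := hx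
    refine Submodule.subset_span ⟨n + 1, ?_⟩
    rw [← T_add]; push_cast; ring_nf
  | zero => simp
  | add x y _ _ hx hy => rw [mul_add]; exact add_mem hx hy
  | smul a x _ hx => rw [mul_smul_comm]; exact Submodule.smul_mem _ a hx

/-- The direct sum `O(d 0) ⊕ ⋯ ⊕ O(d (m-1))` of line bundles on `P¹`, as Čech data. -/
def std (k : Type) [Field k] (m : ℕ) (d : Fin m → ℤ) : VB k where
  V := Fin m → LaurentPolynomial k
  M0 := Submodule.pi Set.univ fun _ => polyLat k
  M1 := Submodule.pi Set.univ fun i => twistLat k (d i)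
  stable0 := by
    intro v hv i _
    have : ((T 1 : LaurentPolynomial k) • v) i = T 1 * v i := rfl
    rw [this]; exact T_mul_mem_polyLat (hv i trivial)
  stable1 := by
    intro v hv i _
    have : ((T (-1) : LaurentPolynomial k) • v) i = T (-1) * v i := rfl
    rw [this]; exact T_mul_mem_twistLat (hv i trivial)

/-- `O ⊕ O(−1)^{⊕(e−1)}`, the "rational" sheaf of rank `e`. -/
def stdRat (k : Type) [Field k] (e : ℕ) : VB k :=
  std k e fun i => if (i : ℕ) = 0 then 0 else -1

/-- A sheaf of modules over a sheaf of algebras `Ā` on `P¹`, encoded by an action of the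
algebra `Λ` of rational sections of `Ā` (an algebra over `k[t,t⁻¹] = O(U₀ ∩ U₁)`)
compatible with the `k[t,t⁻¹]`-structure. -/
structure VBMod (k : Type) [Field k] (Λ : Type) [Ring Λ]
    [Algebra (LaurentPolynomial k) Λ] extends VB k where
  [instModΛ : Module Λ V]
  [instTowerΛ : IsScalarTower (LaurentPolynomial k) Λ V]

attribute [instance] VBMod.instModΛ VBMod.instTowerΛ

variable {Λ : Type} [Ring Λ] [Algebra (LaurentPolynomial k) Λ]

/-- A morphism of `Ā`-module sheaves: a `Λ`-linear map preserving both lattices. -/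
structure VBModHom (E F : VBMod k Λ) where
  toLin : E.V →ₗ[Λ] F.V
  map0 : ∀ v ∈ E.M0, toLin v ∈ F.M0
  map1 : ∀ v ∈ E.M1, toLin v ∈ F.M1

/-- A short exact sequence `0 → E' → E → E'' → 0` of `Ā`-module sheaves: exactness on
`U₀ ∩ U₁` and on the sections over each affine chart. -/
def IsExact {E' E E'' : VBMod k Λ} (f : VBModHom E' E) (g : VBModHom E E'') : Prop :=
  Function.Injective f.toLin ∧
  (∀ v : E.V, g.toLin v = 0 ↔ ∃ u : E'.V, f.toLin u = v) ∧
  Function.Surjective g.toLin ∧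
  (∀ w ∈ E''.M0, ∃ v ∈ E.M0, g.toLin v = w) ∧
  (∀ w ∈ E''.M1, ∃ v ∈ E.M1, g.toLin v = w) ∧
  (∀ v ∈ E.M0, g.toLin v = 0 → ∃ u ∈ E'.M0, f.toLin u = v) ∧
  (∀ v ∈ E.M1, g.toLin v = 0 → ∃ u ∈ E'.M1, f.toLin u = v)



lemma lsmul_eq_C_mul (a : k) (p : LaurentPolynomial k) :
    a • p = LaurentPolynomial.C a * p := by
  rw [LaurentPolynomial.C_eq_algebraMap, Algebra.smul_def]

lemma mem_polyLat_iff {p : LaurentPolynomial k} :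
    p ∈ polyLat k ↔ ∃ q : Polynomial k, Polynomial.toLaurent q = p := by
  constructor
  · intro hp
    induction hp using Submodule.span_induction with
    | mem x hx =>
      obtain ⟨n, rfl⟩ := hx
      exact ⟨Polynomial.X ^ n, Polynomial.toLaurent_X_pow n⟩
    | zero => exact ⟨0, map_zero _⟩
    | add x y _ _ hx hy =>
      obtain ⟨q, rfl⟩ := hx; obtain ⟨q', rfl⟩ := hy; exact ⟨q + q', map_add _ _ _⟩
    | smul a x _ hx =>
      obtain ⟨q, rfl⟩ := hx
      refine ⟨Polynomial.C a * q, ?_⟩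
      rw [map_mul, Polynomial.toLaurent_C, ← lsmul_eq_C_mul]
  · rintro ⟨q, rfl⟩
    induction q using Polynomial.induction_on' with
    | add p q hp hq => rw [map_add]; exact add_mem hp hq
    | monomial n a =>
      rw [Polynomial.toLaurent_C_mul_T, ← lsmul_eq_C_mul]
      exact Submodule.smul_mem _ a (Submodule.subset_span ⟨n, rfl⟩)

lemma mem_twistLat_iff {d : ℤ} {p : LaurentPolynomial k} :
    p ∈ twistLat k d ↔ ∃ q : Polynomial k, T d * invert (Polynomial.toLaurent q) = p := by
  constructor
  · intro hp
    induction hp using Submodule.span_induction with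
    | mem x hx =>
      obtain ⟨n, rfl⟩ := hx
      refine ⟨Polynomial.X ^ n, ?_⟩
      rw [Polynomial.toLaurent_X_pow, invert_T, ← T_add]
      ring_nf
    | zero => exact ⟨0, by simp⟩
    | add x y _ _ hx hy =>
      obtain ⟨q, rfl⟩ := hx; obtain ⟨q', rfl⟩ := hy
      exact ⟨q + q', by rw [map_add, map_add, mul_add]⟩
    | smul a x _ hx =>
      obtain ⟨q, rfl⟩ := hx
      refine ⟨Polynomial.C a * q, ?_⟩
      rw [map_mul, Polynomial.toLaurent_C, map_mul, invert_C, lsmul_eq_C_mul]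
      ring
  · rintro ⟨q, rfl⟩
    induction q using Polynomial.induction_on' with
    | add p q hp hq => rw [map_add, map_add, mul_add]; exact add_mem hp hq
    | monomial n a =>
      rw [Polynomial.toLaurent_C_mul_T, map_mul, invert_C, invert_T]
      have : T d * (LaurentPolynomial.C a * T (-(n : ℤ)))
          = a • T (d - (n : ℤ)) := by
        rw [lsmul_eq_C_mul, sub_eq_add_neg, T_add]; ring
      rw [this]
      exact Submodule.smul_mem _ a (Submodule.subset_span ⟨n, rfl⟩)

lemma polyLat_coeff {p : LaurentPolynomial k} (hp : p ∈ polyLat k) {n : ℤ} (hn : n < 0) :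
    p.coeff n = 0 := by
  induction hp using Submodule.span_induction with
  | mem x hx =>
    obtain ⟨m, rfl⟩ := hx
    show (Finsupp.single (m : ℤ) (1 : k)) n = 0
    rw [Finsupp.single_apply, if_neg (by omega)]
  | zero => rfl
  | add x y _ _ hx hy => show (x + y).coeff n = 0; rw [AddMonoidAlgebra.coeff_add, Finsupp.add_apply, hx, hy, add_zero]
  | smul a x _ hx => show (a • x).coeff n = 0; rw [AddMonoidAlgebra.coeff_smul, Finsupp.smul_apply, hx, smul_zero]

lemma twistLat_coeff {d : ℤ} {p : LaurentPolynomial k} (hp : p ∈ twistLat k d) {n : ℤ}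
    (hn : d < n) : p.coeff n = 0 := by
  induction hp using Submodule.span_induction with
  | mem x hx =>
    obtain ⟨m, rfl⟩ := hx
    show (Finsupp.single (d - (m : ℤ)) (1 : k)) n = 0
    rw [Finsupp.single_apply, if_neg (by omega)]
  | zero => rfl
  | add x y _ _ hx hy => show (x + y).coeff n = 0; rw [AddMonoidAlgebra.coeff_add, Finsupp.add_apply, hx, hy, add_zero]
  | smul a x _ hx => show (a • x).coeff n = 0; rw [AddMonoidAlgebra.coeff_smul, Finsupp.smul_apply, hx, smul_zero]

lemma eq_C_of_coeff {p : LaurentPolynomial k} (h : ∀ n : ℤ, n ≠ 0 → p.coeff n = 0) :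
    p = LaurentPolynomial.C (p.coeff 0) := by
  have : (LaurentPolynomial.C (p.coeff 0) : LaurentPolynomial k) = AddMonoidAlgebra.single 0 (p.coeff 0) := rfl
  rw [this]
  apply AddMonoidAlgebra.ext
  apply Finsupp.ext
  intro n
  rcases eq_or_ne n 0 with rfl | hn
  · rw [AddMonoidAlgebra.coeff_single, Finsupp.single_apply, if_pos rfl]
  · rw [AddMonoidAlgebra.coeff_single, Finsupp.single_apply, if_neg (Ne.symm hn), h n hn]

lemma one_mem_polyLat : (1 : LaurentPolynomial k) ∈ polyLat k := by
  have : (1 : LaurentPolynomial k) = T ((0 : ℕ) : ℤ) := by simp [T_zero]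
  rw [this]; exact Submodule.subset_span ⟨0, rfl⟩

lemma T_self_mem_twistLat (d : ℤ) : (T d : LaurentPolynomial k) ∈ twistLat k d := by
  have : (T d : LaurentPolynomial k) = T (d - ((0 : ℕ) : ℤ)) := by norm_num
  rw [this]; exact Submodule.subset_span ⟨0, rfl⟩


section Aux

lemma std_mem0_iff {e : ℕ} (x : Fin e → LaurentPolynomial k) :
    x ∈ (stdRat k e).M0 ↔ ∀ i, x i ∈ polyLat k := by
  show x ∈ Submodule.pi Set.univ (fun _ => polyLat k) ↔ _
  rw [Submodule.mem_pi]
  exact ⟨fun h i => h i trivial, fun h i _ => h i⟩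

lemma std_mem1_iff {e : ℕ} (x : Fin e → LaurentPolynomial k) :
    x ∈ (stdRat k e).M1 ↔
      ∀ i : Fin e, x i ∈ twistLat k (if (i : ℕ) = 0 then 0 else -1) := by
  show x ∈ Submodule.pi Set.univ (fun i : Fin e => twistLat k (if (i : ℕ) = 0 then 0 else -1)) ↔ _
  rw [Submodule.mem_pi]
  exact ⟨fun h i => h i trivial, fun h i _ => h i⟩

variable {Λ : Type} [Ring Λ] [Algebra (LaurentPolynomial k) Λ]

lemma vbbase {e : ℕ} (N₁ N₂ : VBMod k Λ)
    (i₁ : VBIso N₁.toVB (stdRat k e)) (i₂ : VBIso N₂.toVB (stdRat k e))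
    (hcrit : ∀ S : Submodule Λ N₂.V, S ≠ ⊥ →
      Module.IsTorsion (LaurentPolynomial k)
        (N₂.V ⧸ S.restrictScalars (LaurentPolynomial k)))
    (φ : VBModHom N₁ N₂) (hφ : φ.toLin ≠ 0) :
    Function.Surjective φ.toLin ∧
      (∀ w ∈ N₂.M0, ∃ v ∈ N₁.M0, φ.toLin v = w) ∧
      (∀ w ∈ N₂.M1, ∃ v ∈ N₁.M1, φ.toLin v = w) := by
  classical
  let d : Fin e → ℤ := fun i => if (i : ℕ) = 0 then 0 else -1
  let φL : N₁.V →ₗ[LaurentPolynomial k] N₂.V := LinearMap.restrictScalars _ φ.toLin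
  let ψ : (Fin e → LaurentPolynomial k) →ₗ[LaurentPolynomial k]
      (Fin e → LaurentPolynomial k) :=
    (i₂.toLin.toLinearMap.comp φL).comp i₁.toLin.symm.toLinearMap
  set A : Matrix (Fin e) (Fin e) (LaurentPolynomial k) := LinearMap.toMatrix' ψ with hA
  have hψA : ∀ x, ψ x = A.mulVec x := by
    intro x
    conv_lhs => rw [← Matrix.toLin'_toMatrix' ψ]
    rw [Matrix.toLin'_apply]
  have hψdef : ∀ x, ψ x = i₂.toLin (φ.toLin (i₁.toLin.symm x)) := fun x => rfl
  -- lattice preservation for ψ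
  have hψ0 : ∀ x : Fin e → LaurentPolynomial k,
      (∀ i, x i ∈ polyLat k) → ∀ i, ψ x i ∈ polyLat k := by
    intro x hx
    have h1 : i₁.toLin.symm x ∈ N₁.M0 := by
      rw [i₁.map0]; erw [LinearEquiv.apply_symm_apply]
      exact (std_mem0_iff x).mpr hx
    have h3 := (i₂.map0 _).mp (φ.map0 _ h1)
    rw [hψdef]
    exact fun i => (std_mem0_iff _).mp h3 i
  have hψ1 : ∀ x : Fin e → LaurentPolynomial k,
      (∀ i, x i ∈ twistLat k (d i)) → ∀ i, ψ x i ∈ twistLat k (d i) := by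
    intro x hx
    have h1 : i₁.toLin.symm x ∈ N₁.M1 := by
      rw [i₁.map1]; erw [LinearEquiv.apply_symm_apply]
      exact (std_mem1_iff x).mpr hx
    have h3 := (i₂.map1 _).mp (φ.map1 _ h1)
    rw [hψdef]
    exact fun i => (std_mem1_iff _).mp h3 i
  -- entries of A
  have hA0 : ∀ i j, A i j ∈ polyLat k := by
    intro i j
    have harg : (fun j' : Fin e => if j' = j then (1 : LaurentPolynomial k) else 0)
        = Pi.single j 1 := by
      funext l
      rw [Pi.single_apply]
    have hu : A i j = ψ (Pi.single j 1) i := by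
      rw [hA, LinearMap.toMatrix'_apply]
    rw [hu]
    apply hψ0
    intro l
    rcases eq_or_ne l j with rfl | h
    · rw [Pi.single_eq_same]; exact one_mem_polyLat
    · rw [Pi.single_eq_of_ne h]; exact zero_mem _
  have hA1 : ∀ i j, A i j * T (d j) ∈ twistLat k (d i) := by
    intro i j
    have h1 : ∀ l, (Pi.single j (T (d j)) : Fin e → LaurentPolynomial k) l
        ∈ twistLat k (d l) := by
      intro l
      rcases eq_or_ne l j with rfl | h
      · rw [Pi.single_eq_same]; exact T_self_mem_twistLat _
      · rw [Pi.single_eq_of_ne h]; exact zero_mem _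
    have h2 := hψ1 _ h1 i
    rw [hψA, Matrix.mulVec_single] at h2
    exact h2
  -- lifts of the entries
  choose Ah hAh using fun i j => mem_polyLat_iff.mp (hA0 i j)
  choose Bh hBh using fun i j => mem_twistLat_iff.mp (hA1 i j)
  have hAB : ∀ i j, A i j
      = T (d i) * invert (Polynomial.toLaurent (Bh i j)) * T (-(d j)) := by
    intro i j
    rw [hBh i j, mul_assoc, ← T_add, add_neg_cancel, T_zero, mul_one]
  -- determinant is nonzero
  have hS : LinearMap.range φ.toLin ≠ ⊥ := by rwa [Ne, LinearMap.range_eq_bot]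
  have htor := hcrit _ hS
  have hsolve : ∀ i : Fin e, ∃ (a : nonZeroDivisors (LaurentPolynomial k))
      (x : Fin e → LaurentPolynomial k),
      A.mulVec x = (a : LaurentPolynomial k) • (Pi.single i 1 : Fin e → LaurentPolynomial k) := by
    intro i
    obtain ⟨a, ha⟩ := @htor (Submodule.Quotient.mk (i₂.toLin.symm ((Pi.single i 1 : Fin e → LaurentPolynomial k))))
    rw [Submonoid.smul_def, ← Submodule.Quotient.mk_smul, Submodule.Quotient.mk_eq_zero,
      Submodule.restrictScalars_mem, LinearMap.mem_range] at ha
    obtain ⟨v, hv⟩ := ha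
    refine ⟨a, i₁.toLin v, ?_⟩
    erw [← hψA, hψdef, LinearEquiv.symm_apply_apply, hv, map_smul,
      LinearEquiv.apply_symm_apply]
    rfl
  choose p xs hxs using hsolve
  have hdetA : A.det ≠ 0 := by
    intro h0
    have hAX : A * (Matrix.of fun l i => xs i l)
        = Matrix.diagonal fun i => (p i : LaurentPolynomial k) := by
      refine Matrix.ext fun i j => ?_
      have h := congrFun (hxs j) i
      simp only [Matrix.mulVec, dotProduct] at h
      rw [Matrix.mul_apply]
      rw [show (∑ l, A i l * (Matrix.of fun l i => xs i l) l j)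
          = ∑ l, A i l * xs j l from rfl, h]
      rw [Pi.smul_apply, Pi.single_apply, Matrix.diagonal_apply]
      rcases eq_or_ne i j with rfl | hij
      · simp
      · simp [hij]
    have h1 : A.det * (Matrix.of fun l i => xs i l).det
        = ∏ i, (p i : LaurentPolynomial k) := by
      rw [← Matrix.det_mul, hAX, Matrix.det_diagonal]
    have h2 : (∏ i, (p i : LaurentPolynomial k))
        ∈ nonZeroDivisors (LaurentPolynomial k) :=
      prod_mem fun i _ => (p i).2
    exact nonZeroDivisors.ne_zero h2 (by rw [← h1, h0, zero_mul])
  -- determinant is a nonzero constant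
  have hAmap : A = (Matrix.of Ah).map (Polynomial.toLaurent) := by
    refine Matrix.ext fun i j => ?_
    rw [Matrix.map_apply]
    exact (hAh i j).symm
  have hdet1 : A.det = Polynomial.toLaurent (Matrix.of Ah).det := by
    rw [hAmap, ← RingHom.mapMatrix_apply, ← RingHom.map_det]
  let σ : Polynomial k →+* LaurentPolynomial k :=
    (LaurentPolynomial.invert.toAlgHom.toRingHom).comp (Polynomial.toLaurent)
  have hσ : ∀ q, σ q = invert (Polynomial.toLaurent q) := fun q => rfl
  have hDD : (Matrix.diagonal fun i => (T (d i) : LaurentPolynomial k)) *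
      (Matrix.diagonal fun i => (T (-(d i)) : LaurentPolynomial k)) = 1 := by
    rw [Matrix.diagonal_mul_diagonal]
    have he1 : (fun i => T (d i) * T (-(d i)))
        = fun _ : Fin e => (1 : LaurentPolynomial k) := by
      funext i; rw [← T_add, add_neg_cancel, T_zero]
    rw [he1, Matrix.diagonal_one]
  have hAfact : A = (Matrix.diagonal fun i => (T (d i) : LaurentPolynomial k)) *
      ((Matrix.of Bh).map σ) *
      (Matrix.diagonal fun i => (T (-(d i)) : LaurentPolynomial k)) := by
    refine Matrix.ext fun i j => ?_
    rw [Matrix.mul_diagonal, Matrix.diagonal_mul, Matrix.map_apply]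
    exact hAB i j
  have hdet2 : A.det = σ (Matrix.of Bh).det := by
    have hDD' : (Matrix.diagonal fun i => (T (d i) : LaurentPolynomial k)).det *
        (Matrix.diagonal fun i => (T (-(d i)) : LaurentPolynomial k)).det = 1 := by
      rw [← Matrix.det_mul, hDD, Matrix.det_one]
    rw [hAfact, Matrix.det_mul, Matrix.det_mul, mul_right_comm, hDD', one_mul,
      ← RingHom.mapMatrix_apply, ← RingHom.map_det]
  have hcoeff : ∀ n : ℤ, n ≠ 0 → A.det.coeff n = 0 := by
    intro n hn
    rcases lt_or_gt_of_ne hn with h | h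
    · exact polyLat_coeff (mem_polyLat_iff.mpr ⟨(Matrix.of Ah).det, hdet1.symm⟩) h
    · rw [hdet2, hσ, invert_apply]
      exact polyLat_coeff (mem_polyLat_iff.mpr ⟨(Matrix.of Bh).det, rfl⟩) (by omega)
  obtain ⟨c, hDAC, hc0⟩ : ∃ c : k, A.det = LaurentPolynomial.C c ∧ c ≠ 0 := by
    refine ⟨A.det.coeff 0, eq_C_of_coeff hcoeff, fun h => hdetA ?_⟩
    rw [eq_C_of_coeff hcoeff, h, map_zero]
  have hUA : IsUnit A.det := by
    rw [hDAC]
    exact IsUnit.of_mul_eq_one (LaurentPolynomial.C c⁻¹)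
      (by rw [← map_mul, mul_inv_cancel₀ hc0, map_one])
  have hAhdet : (Matrix.of Ah).det = Polynomial.C c := by
    apply Polynomial.toLaurent_injective
    rw [Polynomial.toLaurent_C, ← hdet1, hDAC]
  have hBhdet : (Matrix.of Bh).det = Polynomial.C c := by
    apply Polynomial.toLaurent_injective
    rw [Polynomial.toLaurent_C]
    apply LaurentPolynomial.invert.injective
    rw [invert_C, ← hσ, ← hdet2, hDAC]
  have hUAh : IsUnit (Matrix.of Ah).det := by
    rw [hAhdet]
    exact Polynomial.isUnit_C.mpr (isUnit_iff_ne_zero.mpr hc0)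
  have hUBh : IsUnit (Matrix.of Bh).det := by
    rw [hBhdet]
    exact Polynomial.isUnit_C.mpr (isUnit_iff_ne_zero.mpr hc0)
  haveI iA := Matrix.invertibleOfIsUnitDet A hUA
  haveI iAh := Matrix.invertibleOfIsUnitDet (Matrix.of Ah) hUAh
  haveI iBh := Matrix.invertibleOfIsUnitDet (Matrix.of Bh) hUBh
  -- master preimage lemma
  have key : ∀ (w₂ : N₂.V) (v : Fin e → LaurentPolynomial k),
      A.mulVec v = i₂.toLin w₂ → φ.toLin (i₁.toLin.symm v) = w₂ := by
    intro w₂ v hv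
    apply i₂.toLin.injective
    calc @id (Fin e → LaurentPolynomial k) (i₂.toLin (φ.toLin (i₁.toLin.symm v))) = ψ v := (hψdef v).symm
      _ = A.mulVec v := hψA v
      _ = @id (Fin e → LaurentPolynomial k) (i₂.toLin w₂) := hv
  refine ⟨?_, ?_, ?_⟩
  · -- surjectivity on V
    intro w₂
    refine ⟨i₁.toLin.symm ((⅟A).mulVec (i₂.toLin w₂)), key _ _ ?_⟩
    erw [Matrix.mulVec_mulVec, mul_invOf_self, Matrix.one_mulVec]
  · -- surjectivity on M0
    intro w₂ hw₂
    have hw : ∀ i, i₂.toLin w₂ i ∈ polyLat k :=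
      (std_mem0_iff _).mp ((i₂.map0 w₂).mp hw₂)
    choose wp hwp using fun i => mem_polyLat_iff.mp (hw i)
    set vh : Fin e → Polynomial k := (⅟(Matrix.of Ah)).mulVec wp with hvh
    have hAv : (Matrix.of Ah).mulVec vh = wp := by
      rw [hvh, Matrix.mulVec_mulVec, mul_invOf_self, Matrix.one_mulVec]
    let v : Fin e → LaurentPolynomial k := fun i => Polynomial.toLaurent (vh i)
    have hvmem : i₁.toLin.symm v ∈ N₁.M0 := by
      rw [i₁.map0]; erw [LinearEquiv.apply_symm_apply]
      exact (std_mem0_iff v).mpr fun i => mem_polyLat_iff.mpr ⟨vh i, rfl⟩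
    refine ⟨i₁.toLin.symm v, hvmem, key _ _ ?_⟩
    funext i
    have h1 : (A.mulVec v) i
        = Polynomial.toLaurent (((Matrix.of Ah).mulVec vh) i) := by
      simp only [Matrix.mulVec, dotProduct, map_sum]
      refine Finset.sum_congr rfl fun l _ => ?_
      rw [map_mul]
      show A i l * Polynomial.toLaurent (vh l) = _
      rw [show ((Matrix.of Ah) i l) = Ah i l from rfl, hAh i l]
    rw [h1, hAv, hwp i]
  · -- surjectivity on M1
    intro w₂ hw₂
    have hw : ∀ i, i₂.toLin w₂ i ∈ twistLat k (d i) :=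
      (std_mem1_iff _).mp ((i₂.map1 w₂).mp hw₂)
    choose wp hwp using fun i => mem_twistLat_iff.mp (hw i)
    set vh : Fin e → Polynomial k := (⅟(Matrix.of Bh)).mulVec wp with hvh
    have hBv : (Matrix.of Bh).mulVec vh = wp := by
      rw [hvh, Matrix.mulVec_mulVec, mul_invOf_self, Matrix.one_mulVec]
    let v : Fin e → LaurentPolynomial k :=
      fun i => T (d i) * invert (Polynomial.toLaurent (vh i))
    have hvmem : i₁.toLin.symm v ∈ N₁.M1 := by
      rw [i₁.map1]; erw [LinearEquiv.apply_symm_apply]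
      exact (std_mem1_iff v).mpr fun i => mem_twistLat_iff.mpr ⟨vh i, rfl⟩
    refine ⟨i₁.toLin.symm v, hvmem, key _ _ ?_⟩
    funext i
    have step : ∀ j, A i j * v j
        = T (d i) * invert (Polynomial.toLaurent (Bh i j * vh j)) := by
      intro j
      show A i j * (T (d j) * invert (Polynomial.toLaurent (vh j))) = _
      calc A i j * (T (d j) * invert (Polynomial.toLaurent (vh j)))
          = T (d i) * invert (Polynomial.toLaurent (Bh i j)) * T (-(d j)) *
            (T (d j) * invert (Polynomial.toLaurent (vh j))) := by rw [hAB i j]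
        _ = T (d i) *
            (invert (Polynomial.toLaurent (Bh i j)) * invert (Polynomial.toLaurent (vh j))) *
            (T (-(d j)) * T (d j)) := by ring
        _ = T (d i) * invert (Polynomial.toLaurent (Bh i j * vh j)) := by
            rw [← T_add, neg_add_cancel, T_zero, mul_one, map_mul, map_mul]
    have h1 : (A.mulVec v) i
        = T (d i) * invert (Polynomial.toLaurent (((Matrix.of Bh).mulVec vh) i)) := by
      simp only [Matrix.mulVec, dotProduct]
      have h2 : ∑ j, A i j * v j
          = ∑ j, T (d i) * invert (Polynomial.toLaurent (Bh i j * vh j)) :=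
        Finset.sum_congr rfl fun j _ => step j
      rw [h2, ← Finset.mul_sum, ← map_sum, ← map_sum]
      rfl
    rw [h1, hBv, hwp i]

lemma vbaux (e : ℕ) (N₂ : VBMod k Λ) (hN₂ : Nonempty (VBIso N₂.toVB (stdRat k e)))
    (hcrit : ∀ S : Submodule Λ N₂.V, S ≠ ⊥ →
      Module.IsTorsion (LaurentPolynomial k)
        (N₂.V ⧸ S.restrictScalars (LaurentPolynomial k)))
    (r : ℕ) :
    ∀ (W : ℕ → VBMod k Λ), Subsingleton (W 0).V →
    (∀ i, i < r → ∃ (Qi : VBMod k Λ) (f : VBModHom (W i) (W (i+1)))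
        (g : VBModHom (W (i+1)) Qi),
        IsExact f g ∧ Nonempty (VBIso Qi.toVB (stdRat k e))) →
    ∀ (φ : VBModHom (W r) N₂), φ.toLin ≠ 0 →
      Function.Surjective φ.toLin ∧
        (∀ w ∈ N₂.M0, ∃ v ∈ (W r).M0, φ.toLin v = w) ∧
        (∀ w ∈ N₂.M1, ∃ v ∈ (W r).M1, φ.toLin v = w) := by
  induction r with
  | zero =>
    intro W hW0 _ φ hφ
    refine absurd (LinearMap.ext fun v => ?_) hφ
    rw [Subsingleton.elim v 0, map_zero]
    exact (LinearMap.zero_apply 0).symm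
  | succ r IH =>
    intro W hW0 hfil φ hφ
    obtain ⟨Qi, f, g, hex, hQ⟩ := hfil r (Nat.lt_succ_self r)
    obtain ⟨hinj, hker, hsurj, hg0, hg1, _, _⟩ := hex
    by_cases h0 : φ.toLin.comp f.toLin = 0
    · -- φ factors through the rational quotient Qi
      have hle : LinearMap.ker g.toLin ≤ LinearMap.ker φ.toLin := by
        intro v hv
        rw [LinearMap.mem_ker] at hv ⊢
        obtain ⟨u, rfl⟩ := (hker v).mp hv
        have := congrFun (congrArg (fun m => m.toFun) h0) u
        simpa using this
      let eqv := g.toLin.quotKerEquivOfSurjective hsurj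
      let ρ : Qi.V →ₗ[Λ] N₂.V :=
        ((LinearMap.ker g.toLin).liftQ φ.toLin hle).comp eqv.symm.toLinearMap
      have heqv : ∀ v, eqv (Submodule.Quotient.mk v) = g.toLin v := fun v => rfl
      have hρg : ∀ v, ρ (g.toLin v) = φ.toLin v := by
        intro v
        have h1 : eqv.symm (g.toLin v) = Submodule.Quotient.mk v := by
          apply eqv.injective
          rw [LinearEquiv.apply_symm_apply, heqv]
        show ((LinearMap.ker g.toLin).liftQ φ.toLin hle) (eqv.symm (g.toLin v)) = _
        rw [h1, Submodule.liftQ_apply]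
      let P : VBModHom Qi N₂ :=
        { toLin := ρ
          map0 := by
            intro q hq
            obtain ⟨v, hv, hgv⟩ := hg0 q hq
            rw [← hgv, hρg]
            exact φ.map0 v hv
          map1 := by
            intro q hq
            obtain ⟨v, hv, hgv⟩ := hg1 q hq
            rw [← hgv, hρg]
            exact φ.map1 v hv }
      have hP : P.toLin ≠ 0 := by
        intro h
        apply hφ
        apply LinearMap.ext
        intro v
        rw [← hρg v, show ρ = P.toLin from rfl, h]
        exact LinearMap.zero_apply _
      obtain ⟨s, s0, s1⟩ := vbbase Qi N₂ hQ.some hN₂.some hcrit P hP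
      refine ⟨?_, ?_, ?_⟩
      · intro w
        obtain ⟨q, hq⟩ := s w
        obtain ⟨v, hv⟩ := hsurj q
        exact ⟨v, by rw [← hρg, hv]; exact hq⟩
      · intro w hw
        obtain ⟨q, hqM, hqw⟩ := s0 w hw
        obtain ⟨v, hvM, hgv⟩ := hg0 q hqM
        exact ⟨v, hvM, by rw [← hρg, hgv]; exact hqw⟩
      · intro w hw
        obtain ⟨q, hqM, hqw⟩ := s1 w hw
        obtain ⟨v, hvM, hgv⟩ := hg1 q hqM
        exact ⟨v, hvM, by rw [← hρg, hgv]; exact hqw⟩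
    · -- restrict φ to the submodule W r
      let φ' : VBModHom (W r) N₂ :=
        { toLin := φ.toLin.comp f.toLin
          map0 := fun v hv => φ.map0 _ (f.map0 v hv)
          map1 := fun v hv => φ.map1 _ (f.map1 v hv) }
      obtain ⟨s, s0, s1⟩ := IH W hW0
        (fun i hi => hfil i (hi.trans (Nat.lt_succ_self r))) φ' h0
      refine ⟨?_, ?_, ?_⟩
      · intro w
        obtain ⟨v, hv⟩ := s w
        exact ⟨f.toLin v, hv⟩
      · intro w hw
        obtain ⟨v, hvM, hvw⟩ := s0 w hw
        exact ⟨f.toLin v, f.map0 v hvM, hvw⟩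
      · intro w hw
        obtain ⟨v, hvM, hvw⟩ := s1 w hw
        exact ⟨f.toLin v, f.map1 v hvM, hvw⟩

end Aux

/-- **Lemma 7.4(ii).**  Let `N₁`, `N₂` be `Ā`-module sheaves on `P¹`, with
`N₂ ≅ O ⊕ O(−1)^{⊕(e−1)}` as a sheaf and `1`-critical as an `Ā`-module (every nonzero
`Ā`-submodule has torsion quotient, i.e. every proper quotient has dimension `< 1`).
Suppose `N₁` admits a finite filtration by `Ā`-submodules whose successive quotients
are isomorphic to `O ⊕ O(−1)^{⊕(e−1)}` (encoded as an iterated tower of extensions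
`0 → W i → W (i+1) → Q i → 0` of `Ā`-module sheaves with each `Q i` rational, and
`N₁ = W r`).  If `φ : N₁ → N₂` is a nonzero morphism of `Ā`-module sheaves, then `φ` is
surjective (on `U₀ ∩ U₁`, and on the sections over each chart). -/
theorem surjective_of_rationally_filtered (k : Type) [Field k] [IsAlgClosed k]
    (Λ : Type) [Ring Λ] [Algebra (LaurentPolynomial k) Λ]
    (e r : ℕ) (he : 1 ≤ e)
    (W : Fin (r + 1) → VBMod k Λ) (Q : Fin r → VBMod k Λ)
    (fs : ∀ i : Fin r, VBModHom (W i.castSucc) (W i.succ))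
    (gs : ∀ i : Fin r, VBModHom (W i.succ) (Q i))
    (hW0 : Subsingleton (W 0).V)
    (hexact : ∀ i, IsExact (fs i) (gs i))
    (hQrat : ∀ i, Nonempty (VBIso (Q i).toVB (stdRat k e)))
    (N₂ : VBMod k Λ)
    (hN₂rat : Nonempty (VBIso N₂.toVB (stdRat k e)))
    (hcrit : ∀ S : Submodule Λ N₂.V, S ≠ ⊥ →
      Module.IsTorsion (LaurentPolynomial k)
        (N₂.V ⧸ S.restrictScalars (LaurentPolynomial k)))
    (φ : VBModHom (W (Fin.last r)) N₂) (hφ : φ.toLin ≠ 0) :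
    Function.Surjective φ.toLin ∧
      (∀ w ∈ N₂.M0, ∃ v ∈ (W (Fin.last r)).M0, φ.toLin v = w) ∧
      (∀ w ∈ N₂.M1, ∃ v ∈ (W (Fin.last r)).M1, φ.toLin v = w) := by
  classical
  let W' : ℕ → VBMod k Λ := fun i => if h : i ≤ r then W ⟨i, Nat.lt_succ_of_le h⟩ else N₂
  have hWeq : ∀ (i : ℕ) (h : i ≤ r), W' i = W ⟨i, Nat.lt_succ_of_le h⟩ :=
    fun i h => dif_pos h
  have h0 : Subsingleton (W' 0).V := by
    have e0 : W' 0 = W 0 := by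
      rw [hWeq 0 (Nat.zero_le r)]
      congr 1
    rw [e0]
    exact hW0
  have hfil : ∀ i, i < r → ∃ (Qi : VBMod k Λ) (f : VBModHom (W' i) (W' (i+1)))
      (g : VBModHom (W' (i+1)) Qi),
      IsExact f g ∧ Nonempty (VBIso Qi.toVB (stdRat k e)) := by
    intro i hi
    have e1 : W' i = W (Fin.castSucc ⟨i, hi⟩) := by
      rw [hWeq i hi.le]
      congr 1
    have e2 : W' (i+1) = W (Fin.succ ⟨i, hi⟩) := by
      rw [hWeq (i+1) hi]
      congr 1
    rw [e1, e2]
    exact ⟨Q ⟨i, hi⟩, fs ⟨i, hi⟩, gs ⟨i, hi⟩, hexact ⟨i, hi⟩, hQrat ⟨i, hi⟩⟩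
  have eφ : W' r = W (Fin.last r) := by
    rw [hWeq r le_rfl]
    congr 1
  revert hφ
  revert φ
  rw [← eφ]
  intro φ hφ
  exact vbaux e N₂ hN₂rat hcrit r W' h0 hfil φ hφ

end
end
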